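/- For every integer n ≥ 1, the twisted partition monoid P_n^Φ has only countably many congruences, i.e. the set of all congruences on P_n^Φ is countable. -/

import Mathlib

namespace TPM

/-- Vertex set `{1,…,n} ∪ {1',…,n'}`: `Sum.inl` = unprimed (upper row),
`Sum.inr` = primed (lower row). -/
abbrev V (n : ℕ) := Fin n ⊕ Fin n

/-- The partition monoid `P_n`: set partitions of the `2n`-element set `V n`,
encoded as equivalence relations (setoids). -/
abbrev PM (n : ℕ) := Setoid (V n)

/-- Three-row vertex set of the product graph: top / middle / bottom. -/
abbrev W (n : ℕ) := Fin n ⊕ (Fin n ⊕ Fin n)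

variable {n : ℕ}

/-- First factor: unprimed ↦ top, primed ↦ middle. -/
def topMid : V n → W n
  | Sum.inl i => Sum.inl i
  | Sum.inr i => Sum.inr (Sum.inl i)

/-- Second factor: unprimed ↦ middle, primed ↦ bottom. -/
def midBot : V n → W n
  | Sum.inl i => Sum.inr (Sum.inl i)
  | Sum.inr i => Sum.inr (Sum.inr i)

/-- Embedding of `V n` as top and bottom rows of the three-row set. -/
def topBot : V n → W n
  | Sum.inl i => Sum.inl i
  | Sum.inr i => Sum.inr (Sum.inr i)

/-- Edge relation of the product graph `Γ(α,β)`. -/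
def graphRel (α β : PM n) (x y : W n) : Prop :=
  (∃ u v : V n, α.r u v ∧ x = topMid u ∧ y = topMid v) ∨
  (∃ u v : V n, β.r u v ∧ x = midBot u ∧ y = midBot v)

/-- Connectivity (equivalence closure of the edge relation) in `Γ(α,β)`. -/
def conn (α β : PM n) : W n → W n → Prop := Relation.EqvGen (graphRel α β)

/-- Connectivity in `Γ(α,β)`, as a setoid on the three-row vertex set. -/
def connSetoid (α β : PM n) : Setoid (W n) :=
  ⟨conn α β, Relation.EqvGen.is_equivalence _⟩

/-- The product of two partitions: `x,y` lie in the same block of `αβ` iff they are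
connected in `Γ(α,β)`. -/
def pmul (α β : PM n) : PM n :=
  ⟨fun x y => conn α β (topBot x) (topBot y),
    ⟨fun _ => Relation.EqvGen.refl _, fun h => Relation.EqvGen.symm _ _ h, fun h h' => Relation.EqvGen.trans _ _ _ h h'⟩⟩

/-- A vertex of the three-row set lies in the middle row. -/
def isMid (x : W n) : Prop := ∃ i : Fin n, x = Sum.inr (Sum.inl i)

/-- `Φ(α,β)`: the number of floating components of `Γ(α,β)`, i.e. connected components
all of whose vertices lie in the middle row. -/
noncomputable def Phi (α β : PM n) : ℕ :=
  Nat.card {c : Quotient (connSetoid α β) //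
    ∀ x : W n, Quotient.mk (connSetoid α β) x = c → isMid x}

/-- The rank of a partition: the number of transversal blocks (blocks containing both an
unprimed and a primed element). -/
noncomputable def rnk (α : PM n) : ℕ :=
  Nat.card {c : Quotient α //
    (∃ i : Fin n, Quotient.mk α (Sum.inl i) = c) ∧ ∃ i : Fin n, Quotient.mk α (Sum.inr i) = c}

/-- Which row of `V n` a point lies in. -/
def side : V n → Bool
  | Sum.inl _ => true
  | Sum.inr _ => false

/-- `α̂`: split each transversal of `α` into its unprimed part and its primed part. -/
def hat (α : PM n) : PM n :=
  ⟨fun x y => α.r x y ∧ side x = side y,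
    ⟨fun x => ⟨α.iseqv.refl x, rfl⟩,
     fun h => ⟨α.iseqv.symm h.1, h.2.symm⟩,
     fun h h' => ⟨α.iseqv.trans h.1 h'.1, h.2.trans h'.2⟩⟩⟩

/-- The twisted product on `ℕ × P_n`:  `(i,α)(j,β) = (i + j + Φ(α,β), αβ)`. -/
noncomputable def tmul (a b : ℕ × PM n) : ℕ × PM n :=
  (a.1 + b.1 + Phi a.2 b.2, pmul a.2 b.2)

/-- A congruence on a set equipped with a binary operation: an equivalence relation
compatible with the operation on both sides. -/
def IsCongruence {M : Type*} (mul : M → M → M) (σ : M → M → Prop) : Prop :=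
  Equivalence σ ∧ ∀ x y a, σ x y → σ (mul a x) (mul a y) ∧ σ (mul x a) (mul y a)

/-- Green's relation `R`: equality of the right ideals `xM = yM`. -/
def greenR {M : Type*} (mul : M → M → M) (x y : M) : Prop :=
  Set.range (mul x) = Set.range (mul y)

/-- Green's relation `L`: `Mx = My`. -/
def greenL {M : Type*} (mul : M → M → M) (x y : M) : Prop :=
  Set.range (fun a => mul a x) = Set.range (fun a => mul a y)

/-- The principal two-sided ideal `MxM`. -/
def jSet {M : Type*} (mul : M → M → M) (x : M) : Set M :=
  Set.range (fun p : M × M => mul (mul p.1 x) p.2)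

/-- Green's relation `J`: `MxM = MyM`. -/
def greenJ {M : Type*} (mul : M → M → M) (x y : M) : Prop :=
  jSet mul x = jSet mul y

/-- Green's relation `H = R ∩ L`. -/
def greenH {M : Type*} (mul : M → M → M) (x y : M) : Prop :=
  greenR mul x y ∧ greenL mul x y

/-- Green's relation `D = R ∘ L`. -/
def greenD {M : Type*} (mul : M → M → M) (x y : M) : Prop :=
  ∃ z, greenR mul x z ∧ greenL mul z y

/-- `pd(α,β)` satisfies `P`, where `α` has `p` transversals: there are representatives
`a s` of the upper parts of the `p` (pairwise distinct) transversals of `α`, with `b s`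
representing the corresponding lower parts, and a permutation `π` with `P π` such that the
block of `β` containing `a s` contains `b (π s)`.  (For H-related `α, β ∈ D_p` this says
exactly that some representation of the permutational difference `pd(α,β)` satisfies `P`.) -/
def pdIn (p : ℕ) (P : Equiv.Perm (Fin p) → Prop) (α β : PM n) : Prop :=
  ∃ (a b : Fin p → Fin n) (π : Equiv.Perm (Fin p)),
    (∀ s t, α.r (Sum.inl (a s)) (Sum.inl (a t)) → s = t) ∧
    (∀ s, α.r (Sum.inl (a s)) (Sum.inr (b s))) ∧
    (∀ s, β.r (Sum.inl (a s)) (Sum.inr (b (π s)))) ∧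
    P π

/-- The relation `ν_N` on `D_p`, for a subgroup `N ≤ S_p`:  H-related pairs of rank-`p`
partitions whose permutational difference lies in `N`. -/
def nuRel (p : ℕ) (N : Subgroup (Equiv.Perm (Fin p))) (α β : PM n) : Prop :=
  rnk α = p ∧ rnk β = p ∧ greenH pmul α β ∧ pdIn p (· ∈ N) α β

/-- The congruence `(m, m+d)^♯` on the additive monoid `ℕ` (intended for `d ≥ 1`). -/
def natCong (m d : ℕ) (i j : ℕ) : Prop :=
  i = j ∨ (m ≤ i ∧ m ≤ j ∧ i % d = j % d)

/-- `min θ ≤ i` for a congruence `θ` on `ℕ` (with `min Δ_ℕ = ∞`). -/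
def minLE (θ : ℕ → ℕ → Prop) (i : ℕ) : Prop :=
  ∃ a b, θ a b ∧ a ≠ b ∧ a ≤ i

/-- `k ≤ min θ` for a congruence `θ` on `ℕ` (with `min Δ_ℕ = ∞`). -/
def leMin (k : ℕ) (θ : ℕ → ℕ → Prop) : Prop :=
  ∀ a b, θ a b → a ≠ b → k ≤ a

/-- The possible entries of a C-matrix. -/
inductive CEntry : Type
  | delta | muUp | muDown | mu | lam | rho | R
  | nsym (q : ℕ) (N : Subgroup (Equiv.Perm (Fin q)))

/-- Whether a C-matrix entry is an N-symbol. -/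
def isNsym : CEntry → Prop
  | CEntry.nsym _ _ => True
  | _ => False

/-- The allowed values of the symbol `ζ` in row types RT2, RT5, RT6. -/
def isZeta (e : CEntry) : Prop :=
  e = CEntry.mu ∨ e = CEntry.muUp ∨ e = CEntry.muDown ∨ e = CEntry.delta

/-- The allowed values of the symbol `ξ` in row types RT4–RT7: any of `μ,ρ,λ,R` if
`d = 1`, and only `μ` if `d > 1`. -/
def xiOK (d : ℕ) (e : CEntry) : Prop :=
  e = CEntry.mu ∨ (d = 1 ∧ (e = CEntry.rho ∨ e = CEntry.lam ∨ e = CEntry.R))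

/-- Row type RT1 for rows 0 and 1: all entries `Δ`. -/
def RT1 (M0 M1 : ℕ → CEntry) : Prop :=
  (∀ i, M0 i = CEntry.delta) ∧ (∀ i, M1 i = CEntry.delta)

/-- Row type RT2. -/
def RT2 (Θ0 Θ1 : ℕ → ℕ → Prop) (M0 M1 : ℕ → CEntry) : Prop :=
  Θ0 = Eq ∧ Θ1 = Eq ∧
  ∃ i ζ, isZeta ζ ∧
    (∀ j, j < i → M0 j = CEntry.delta) ∧ (∀ j, i ≤ j → M0 j = CEntry.mu) ∧
    (∀ j, j < i → M1 j = CEntry.delta) ∧ M1 i = ζ ∧ (∀ j, i < j → M1 j = CEntry.mu)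

/-- Row type RT3. -/
def RT3 (Θ0 : ℕ → ℕ → Prop) (M0 M1 : ℕ → CEntry) : Prop :=
  ∃ m ξ, Θ0 = natCong m 1 ∧ (ξ = CEntry.rho ∨ ξ = CEntry.lam ∨ ξ = CEntry.R) ∧
    (∀ i, M1 i = CEntry.delta) ∧
    (∀ j, j < m → M0 j = CEntry.delta) ∧ (∀ j, m ≤ j → M0 j = ξ)

/-- Row type RT4. -/
def RT4 (Θ0 Θ1 : ℕ → ℕ → Prop) (M0 M1 : ℕ → CEntry) : Prop :=
  ∃ m d ξ, 1 ≤ d ∧ Θ0 = natCong m d ∧ Θ1 = natCong m d ∧ xiOK d ξ ∧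
    (∀ j, j < m → M0 j = CEntry.delta ∧ M1 j = CEntry.delta) ∧
    (∀ j, m ≤ j → M0 j = ξ ∧ M1 j = ξ)

/-- Row type RT5. -/
def RT5 (Θ0 Θ1 : ℕ → ℕ → Prop) (M0 M1 : ℕ → CEntry) : Prop :=
  ∃ m d i ξ ζ, 1 ≤ d ∧ i < m ∧ Θ0 = natCong m d ∧ Θ1 = natCong (m + 1) d ∧
    xiOK d ξ ∧ isZeta ζ ∧
    (∀ j, j < i → M0 j = CEntry.delta) ∧ (∀ j, i ≤ j → j < m → M0 j = CEntry.mu) ∧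
    (∀ j, m ≤ j → M0 j = ξ) ∧
    (∀ j, j < i → M1 j = CEntry.delta) ∧ M1 i = ζ ∧
    (∀ j, i < j → j ≤ m → M1 j = CEntry.mu) ∧ (∀ j, m < j → M1 j = ξ)

/-- Row type RT6. -/
def RT6 (Θ0 Θ1 : ℕ → ℕ → Prop) (M0 M1 : ℕ → CEntry) : Prop :=
  ∃ m l d ξ ζ, 1 ≤ d ∧ m < l ∧ Θ0 = natCong m d ∧ Θ1 = natCong l d ∧
    xiOK d ξ ∧ isZeta ζ ∧
    (∀ j, j < m → M0 j = CEntry.delta) ∧ (∀ j, m ≤ j → M0 j = ξ) ∧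
    (∀ j, j < l - 1 → M1 j = CEntry.delta) ∧ M1 (l - 1) = ζ ∧ (∀ j, l ≤ j → M1 j = ξ)

/-- Row type RT7. -/
def RT7 (Θ0 Θ1 : ℕ → ℕ → Prop) (M0 M1 : ℕ → CEntry) : Prop :=
  ∃ m l d ξ, 1 ≤ d ∧ 0 < m ∧ m + 1 < l ∧ (l - 1) % d = m % d ∧
    Θ0 = natCong m d ∧ Θ1 = natCong l d ∧ xiOK d ξ ∧
    (∀ j, j < m - 1 → M0 j = CEntry.delta) ∧ M0 (m - 1) = CEntry.mu ∧
    (∀ j, m ≤ j → M0 j = ξ) ∧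
    (∀ j, j < l - 1 → M1 j = CEntry.delta) ∧ M1 (l - 1) = CEntry.mu ∧
    (∀ j, l ≤ j → M1 j = ξ)

/-- Row type RT8 for a row `q ≥ 2`: all entries `Δ`. -/
def RT8 (Mq : ℕ → CEntry) : Prop := ∀ i, Mq i = CEntry.delta

/-- Row type RT9 for a row `q ≥ 2`. -/
def RT9 (q : ℕ) (Θq : ℕ → ℕ → Prop) (Mq : ℕ → CEntry) : Prop :=
  ∃ (i k : ℕ) (Ns : ℕ → Subgroup (Equiv.Perm (Fin q))),
    i ≤ k ∧ leMin k Θq ∧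
    (∀ j, i ≤ j → j ≤ k → Ns j ≠ ⊥ ∧ (Ns j).Normal) ∧
    (∀ j j', i ≤ j → j ≤ j' → j' ≤ k → Ns j ≤ Ns j') ∧
    (∀ j, j < i → Mq j = CEntry.delta) ∧
    (∀ j, i ≤ j → j < k → Mq j = CEntry.nsym q (Ns j)) ∧
    (∀ j, k ≤ j → Mq j = CEntry.nsym q (Ns k))

/-- Row type RT10 for a row `q ≥ 2`. -/
def RT10 (q : ℕ) (Θq : ℕ → ℕ → Prop) (Mq : ℕ → CEntry) : Prop :=
  ∃ (i m : ℕ) (Ns : ℕ → Subgroup (Equiv.Perm (Fin q))),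
    i ≤ m ∧ Θq = natCong m 1 ∧
    (∀ j, i ≤ j → j < m → Ns j ≠ ⊥ ∧ (Ns j).Normal) ∧
    (∀ j j', i ≤ j → j ≤ j' → j' < m → Ns j ≤ Ns j') ∧
    (∀ j, j < i → Mq j = CEntry.delta) ∧
    (∀ j, i ≤ j → j < m → Mq j = CEntry.nsym q (Ns j)) ∧
    (∀ j, m ≤ j → Mq j = CEntry.R)

/-- A C-pair for `P_n^Φ`: a descending chain `Θ = (θ_0 ⊇ ⋯ ⊇ θ_n)` of congruences on
`(ℕ,+)` together with a matrix `M = (M_{qi})`, `0 ≤ q ≤ n`, `i ∈ ℕ`, whose rows 0 and 1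
jointly have one of the types RT1–RT7, whose rows `q ≥ 2` have one of the types RT8–RT10,
and which satisfies the verticality conditions (V1) and (V2). -/
def IsCPair (n : ℕ) (Θ : ℕ → ℕ → ℕ → Prop) (M : ℕ → ℕ → CEntry) : Prop :=
  (∀ q, q ≤ n → IsCongruence (· + ·) (Θ q)) ∧
  (∀ q r, q ≤ r → r ≤ n → ∀ i j, Θ r i j → Θ q i j) ∧
  (RT1 (M 0) (M 1) ∨ RT2 (Θ 0) (Θ 1) (M 0) (M 1) ∨ RT3 (Θ 0) (M 0) (M 1) ∨
    RT4 (Θ 0) (Θ 1) (M 0) (M 1) ∨ RT5 (Θ 0) (Θ 1) (M 0) (M 1) ∨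
    RT6 (Θ 0) (Θ 1) (M 0) (M 1) ∨ RT7 (Θ 0) (Θ 1) (M 0) (M 1)) ∧
  (∀ q, 2 ≤ q → q ≤ n → (RT8 (M q) ∨ RT9 q (Θ q) (M q) ∨ RT10 q (Θ q) (M q))) ∧
  (∀ q i, 1 ≤ q → q ≤ n → isNsym (M q i) →
    ¬(M (q - 1) i = CEntry.delta ∨ M (q - 1) i = CEntry.muUp ∨
      M (q - 1) i = CEntry.muDown ∨ isNsym (M (q - 1) i))) ∧
  (∀ q i, 2 ≤ q → q ≤ n → M q i = CEntry.R → M (q - 1) i = CEntry.R)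

/-- The relation `cg(Θ,M)` on `P_n^Φ` associated with a C-pair `(Θ,M)`: conditions
(C1)–(C8). -/
def cg (n : ℕ) (Θ : ℕ → ℕ → ℕ → Prop) (M : ℕ → ℕ → CEntry)
    (a b : ℕ × PM n) : Prop :=
  -- (C1)
  (M (rnk a.2) a.1 = CEntry.delta ∧ M (rnk b.2) b.1 = CEntry.delta ∧
    Θ (rnk a.2) a.1 b.1 ∧ a.2 = b.2) ∨
  -- (C2)
  (M (rnk a.2) a.1 = CEntry.R ∧ M (rnk b.2) b.1 = CEntry.R) ∨
  -- (C3)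
  (∃ p N, M (rnk a.2) a.1 = CEntry.nsym p N ∧ M (rnk b.2) b.1 = CEntry.nsym p N ∧
    Θ (rnk a.2) a.1 b.1 ∧ rnk a.2 = p ∧ greenH pmul a.2 b.2 ∧ pdIn p (· ∈ N) a.2 b.2) ∨
  -- (C4)
  (M (rnk a.2) a.1 = CEntry.lam ∧ M (rnk b.2) b.1 = CEntry.lam ∧
    greenL pmul (hat a.2) (hat b.2)) ∨
  -- (C5)
  (M (rnk a.2) a.1 = CEntry.rho ∧ M (rnk b.2) b.1 = CEntry.rho ∧
    greenR pmul (hat a.2) (hat b.2)) ∨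
  -- (C6)
  (M (rnk a.2) a.1 = CEntry.muDown ∧ M (rnk b.2) b.1 = CEntry.muDown ∧
    hat a.2 = hat b.2 ∧ greenL pmul a.2 b.2) ∨
  -- (C7)
  (M (rnk a.2) a.1 = CEntry.muUp ∧ M (rnk b.2) b.1 = CEntry.muUp ∧
    hat a.2 = hat b.2 ∧ greenR pmul a.2 b.2) ∨
  -- (C8)
  (M (rnk a.2) a.1 = CEntry.mu ∧ M (rnk b.2) b.1 = CEntry.mu ∧
    hat a.2 = hat b.2 ∧
    ((rnk a.2 = rnk b.2 ∧ Θ (rnk a.2) a.1 b.1) ∨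
     (rnk a.2 ≠ rnk b.2 ∧ Θ 0 (a.1 + rnk b.2) (b.1 + rnk a.2) ∧
        ¬ minLE (Θ (rnk a.2)) a.1 ∧ ¬ minLE (Θ (rnk b.2)) b.1) ∨
     (rnk a.2 ≠ rnk b.2 ∧ Θ 0 (a.1 + rnk b.2) (b.1 + rnk a.2) ∧
        minLE (Θ (rnk a.2)) a.1 ∧ minLE (Θ (rnk b.2)) b.1)))

/-- The C-pair `(Θ,M)` is exceptional with exceptional row `q`, where
`θ_q = (m, m+2d)^♯`. -/
def ExcAt (n : ℕ) (Θ : ℕ → ℕ → ℕ → Prop) (M : ℕ → ℕ → CEntry) (q m d : ℕ) : Prop :=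
  2 ≤ q ∧ q ≤ n ∧ 1 ≤ d ∧ Θ q = natCong m (2 * d) ∧
  ((2 < q ∧ M q m = CEntry.nsym q (alternatingGroup (Fin q))) ∨
   (q = 2 ∧ M 2 m = CEntry.delta ∧
     (M 1 m = CEntry.mu ∨ M 1 m = CEntry.rho ∨ M 1 m = CEntry.lam ∨ M 1 m = CEntry.R) ∧
     (∀ i j, natCong m d i j → Θ 1 i j)))

/-- The exceptional congruence `cgx(Θ,M)` associated with an exceptional C-pair:
`cg(Θ,M)` together with the pairs of (C9). -/
def cgx (n : ℕ) (Θ : ℕ → ℕ → ℕ → Prop) (M : ℕ → ℕ → CEntry) (q m d : ℕ)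
    (a b : ℕ × PM n) : Prop :=
  cg n Θ M a b ∨
  (rnk a.2 = q ∧ rnk b.2 = q ∧ natCong m d a.1 b.1 ∧ ¬ Θ q a.1 b.1 ∧
    greenH pmul a.2 b.2 ∧ pdIn q (fun π => π ∉ alternatingGroup (Fin q)) a.2 b.2)

/-- The Rees relation of a subset `I`. -/
def rees {M : Type*} (I : Set M) (x y : M) : Prop := x = y ∨ (x ∈ I ∧ y ∈ I)

/-- A (possibly empty) ideal of `P_n^Φ`: `MIM ⊆ I`. -/
def tIdeal (n : ℕ) (I : Set (ℕ × PM n)) : Prop :=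
  ∀ a b x, x ∈ I → tmul (tmul a x) b ∈ I

/-- `I(σ)`: the union of all ideals `I` of `P_n^Φ` whose Rees congruence is contained
in `σ`. -/
def Isig (n : ℕ) (σ : (ℕ × PM n) → (ℕ × PM n) → Prop) : Set (ℕ × PM n) :=
  ⋃₀ {I | tIdeal n I ∧ ∀ x y, rees I x y → σ x y}

/-- The 0-twisted partition monoid `P_{n,0}^Φ`, carried by `Option (P_n)` with
`none` the zero element `✗`. -/
noncomputable def mul0 (a b : Option (PM n)) : Option (PM n) :=
  match a, b with
  | some α, some β => if Phi α β = 0 then some (pmul α β) else none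
  | _, _ => none

/-- `rank a ≤ q`, where `rank ✗ = -∞`. -/
def rnkLE (a : Option (PM n)) (q : ℕ) : Prop :=
  ∀ α, a = some α → rnk α ≤ q

/-- The Rees congruence `R_q` on `P_{n,0}^Φ`. -/
def ReesQ (q : ℕ) (a b : Option (PM n)) : Prop :=
  a = b ∨ (rnkLE a q ∧ rnkLE b q)

/-- Lift a relation on `P_n` to `P_{n,0}^Φ = P_n ∪ {✗}`. -/
def lift2 (r : PM n → PM n → Prop) (a b : Option (PM n)) : Prop :=
  ∃ α β, a = some α ∧ b = some β ∧ r α β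


/-! ### Auxiliary material for the countability proof -/

section Aux

/-- The identity partition: blocks `{i, i'}`. -/
def idp : PM n :=
  ⟨fun x y => Sum.elim id id x = Sum.elim id id y,
    ⟨fun _ => rfl, fun h => h.symm, fun h h' => h.trans h'⟩⟩

/-- Collapse the three-row set for left multiplication by `idp`. -/
def collapseL : W n → V n
  | Sum.inl i => Sum.inl i
  | Sum.inr (Sum.inl i) => Sum.inl i
  | Sum.inr (Sum.inr i) => Sum.inr i

lemma collapseL_topBot (x : V n) : collapseL (topBot x) = x := by
  cases x <;> rfl

lemma collapseL_midBot (x : V n) : collapseL (midBot x) = x := by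
  cases x <;> rfl

lemma conn_idp_left (α : PM n) {x y : W n} (h : conn idp α x y) :
    α.r (collapseL x) (collapseL y) := by
  induction h with
  | rel x y hxy =>
      rcases hxy with ⟨u, v, huv, rfl, rfl⟩ | ⟨u, v, huv, rfl, rfl⟩
      · have hu : collapseL (topMid u) = Sum.inl (Sum.elim id id u) := by
          cases u <;> rfl
        have hv : collapseL (topMid v) = Sum.inl (Sum.elim id id v) := by
          cases v <;> rfl
        rw [hu, hv, huv]
      · rw [collapseL_midBot, collapseL_midBot]
        exact huv
  | refl x => exact α.iseqv.refl _
  | symm x y _ ih => exact α.iseqv.symm ih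
  | trans x y z _ _ ih₁ ih₂ => exact α.iseqv.trans ih₁ ih₂

lemma conn_topBot_midBot (α : PM n) (x : V n) :
    conn idp α (topBot x) (midBot x) := by
  cases x with
  | inl i =>
      exact Relation.EqvGen.rel _ _ (Or.inl ⟨Sum.inl i, Sum.inr i, rfl, rfl, rfl⟩)
  | inr i => exact Relation.EqvGen.refl _

lemma pmul_idp (α : PM n) : pmul idp α = α := by
  apply Setoid.ext
  intro x y
  constructor
  · intro h
    have := conn_idp_left α h
    rwa [collapseL_topBot, collapseL_topBot] at this
  · intro h
    refine Relation.EqvGen.trans _ _ _ (conn_topBot_midBot α x)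
      (Relation.EqvGen.trans _ _ _ ?_
        (Relation.EqvGen.symm _ _ (conn_topBot_midBot α y)))
    exact Relation.EqvGen.rel _ _ (Or.inr ⟨x, y, h, rfl, rfl⟩)

lemma Phi_idp (α : PM n) : Phi idp α = 0 := by
  have : IsEmpty {c : Quotient (connSetoid idp α) //
      ∀ x : W n, Quotient.mk (connSetoid idp α) x = c → isMid x} := by
    constructor
    rintro ⟨c, hc⟩
    obtain ⟨x₀, hx₀⟩ := Quotient.exists_rep c
    obtain ⟨i, rfl⟩ := hc x₀ hx₀
    have hedge : conn idp α (Sum.inl i : W n) (Sum.inr (Sum.inl i)) :=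
      Relation.EqvGen.rel _ _ (Or.inl ⟨Sum.inl i, Sum.inr i, rfl, rfl, rfl⟩)
    have : Quotient.mk (connSetoid idp α) (Sum.inl i : W n) = c := by
      rw [← hx₀]; exact Quotient.sound hedge
    obtain ⟨j, hj⟩ := hc _ this
    exact absurd hj (by simp)
  haveI := this
  exact Nat.card_of_isEmpty

lemma tmul_shift (k i : ℕ) (α : PM n) : tmul (k, idp) (i, α) = (k + i, α) := by
  simp [tmul, Phi_idp, pmul_idp]

/-! ### Congruences on ℕ -/

/-- A translation-invariant equivalence relation on `ℕ`. -/
def TransEquiv (θ : ℕ → ℕ → Prop) : Prop :=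
  Equivalence θ ∧ ∀ i j, θ i j → θ (i + 1) (j + 1)

lemma TransEquiv.shift {θ : ℕ → ℕ → Prop} (h : TransEquiv θ) (k : ℕ) {i j : ℕ}
    (hij : θ i j) : θ (i + k) (j + k) := by
  induction k with
  | zero => exact hij
  | succ k ih => exact h.2 _ _ ih

lemma natCong_refl (m d i : ℕ) : natCong m d i i := Or.inl rfl

lemma natCong_symm {m d i j : ℕ} (h : natCong m d i j) : natCong m d j i := by
  rcases h with h | ⟨h1, h2, h3⟩
  · exact Or.inl h.symm
  · exact Or.inr ⟨h2, h1, h3.symm⟩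

/-- Classification of translation-invariant equivalences on ℕ. -/
lemma transEquiv_classify {θ : ℕ → ℕ → Prop} (h : TransEquiv θ) :
    θ = Eq ∨ ∃ m d, 1 ≤ d ∧ θ = natCong m d := by
  by_cases htriv : θ = Eq
  · exact Or.inl htriv
  right
  -- θ is nontrivial: get a pair a < b with θ a b
  have hne : ∃ a b, a < b ∧ θ a b := by
    by_contra hcon
    push_neg at hcon
    apply htriv
    funext i j
    apply propext
    constructor
    · intro hij
      rcases lt_trichotomy i j with hlt | heq | hgt
      · exact absurd hij (hcon i j hlt)
      · exact heq
      · exact absurd (h.1.symm hij) (hcon j i hgt)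
    · rintro rfl; exact h.1.refl i
  -- the set of positive differences
  set E : Set ℕ := {e | 0 < e ∧ ∃ i, θ i (i + e)} with hE
  have hEne : E.Nonempty := by
    obtain ⟨a, b, hab, hθ⟩ := hne
    exact ⟨b - a, by omega, a, by
      have : a + (b - a) = b := by omega
      rw [this]; exact hθ⟩
  set d := sInf E with hd
  obtain ⟨hdpos, i₀, hi₀⟩ : d ∈ E := Nat.sInf_mem hEne
  -- chains of d-steps above i₀
  have hchain : ∀ l i, i₀ ≤ i → θ i (i + l * d) := by
    intro l
    induction l with
    | zero => intro i _; simpa using h.1.refl i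
    | succ l ih =>
        intro i hi
        refine h.1.trans (ih i hi) ?_
        have := h.shift (i + l * d - i₀) hi₀
        have heq1 : i₀ + (i + l * d - i₀) = i + l * d := by omega
        have hsm : (l + 1) * d = l * d + d := by ring
        have heq2 : i₀ + d + (i + l * d - i₀) = i + (l + 1) * d := by omega
        rwa [heq1, heq2] at this
  -- every element of E is a multiple of d
  have hdvd : ∀ e, e ∈ E → d ∣ e := by
    intro e
    induction e using Nat.strong_induction_on with
    | _ e ih =>
      rintro ⟨hepos, i, hi⟩
      have hde : d ≤ e := Nat.sInf_le ⟨hepos, i, hi⟩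
      rcases eq_or_lt_of_le hde with heq | hlt
      · exact heq ▸ dvd_refl d
      · -- θ (L+d) (L+e) where L = max i i₀
        set L := max i i₀ with hL
        have h1 : θ L (L + e) := by
          have := h.shift (L - i) hi
          have e1 : i + (L - i) = L := by omega
          have e2 : i + e + (L - i) = L + e := by omega
          rwa [e1, e2] at this
        have h2 : θ L (L + d) := by
          have := h.shift (L - i₀) hi₀
          have e1 : i₀ + (L - i₀) = L := by omega
          have e2 : i₀ + d + (L - i₀) = L + d := by omega
          rwa [e1, e2] at this
        have h3 : θ (L + d) ((L + d) + (e - d)) := by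
          have : L + d + (e - d) = L + e := by omega
          rw [this]
          exact h.1.trans (h.1.symm h2) h1
        have : d ∣ e - d := ih (e - d) (by omega) ⟨by omega, L + d, h3⟩
        obtain ⟨t, ht⟩ := this
        refine ⟨t + 1, ?_⟩
        have : d * (t + 1) = d * t + d := by ring
        omega
  -- the minimal base point
  set A : Set ℕ := {a | ∃ e, 0 < e ∧ θ a (a + e)} with hA
  have hAne : A.Nonempty := by
    obtain ⟨a, b, hab, hθ⟩ := hne
    exact ⟨a, b - a, by omega, by
      have : a + (b - a) = b := by omega
      rw [this]; exact hθ⟩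
  set m := sInf A with hm
  obtain ⟨e₀, he₀pos, hme₀⟩ : m ∈ A := Nat.sInf_mem hAne
  have he₀dvd : d ∣ e₀ := hdvd e₀ ⟨he₀pos, m, hme₀⟩
  -- chains of e₀-steps above m
  have hchain₀ : ∀ l i, m ≤ i → θ i (i + l * e₀) := by
    intro l
    induction l with
    | zero => intro i _; simpa using h.1.refl i
    | succ l ih =>
        intro i hi
        refine h.1.trans (ih i hi) ?_
        have := h.shift (i + l * e₀ - m) hme₀
        have heq1 : m + (i + l * e₀ - m) = i + l * e₀ := by omega
        have hsm : (l + 1) * e₀ = l * e₀ + e₀ := by ring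
        have heq2 : m + e₀ + (i + l * e₀ - m) = i + (l + 1) * e₀ := by omega
        rwa [heq1, heq2] at this
  refine ⟨m, d, hdpos, ?_⟩
  funext i j
  apply propext
  constructor
  · intro hij
    by_cases hij' : i = j
    · exact Or.inl hij'
    · -- wlog i < j via a symmetric helper
      have key : ∀ a b, a < b → θ a b → m ≤ a ∧ a % d = b % d := by
        intro a b hab hθab
        constructor
        · exact Nat.sInf_le ⟨b - a, by omega, by
            have : a + (b - a) = b := by omega
            rw [this]; exact hθab⟩
        · have hdv : d ∣ b - a := hdvd (b - a) ⟨by omega, a, by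
            have : a + (b - a) = b := by omega
            rw [this]; exact hθab⟩
          exact (Nat.modEq_iff_dvd' (le_of_lt hab)).mpr hdv
      rcases lt_or_gt_of_ne hij' with hlt | hgt
      · obtain ⟨h1, h2⟩ := key i j hlt hij
        exact Or.inr ⟨h1, by omega, h2⟩
      · obtain ⟨h1, h2⟩ := key j i hgt (h.1.symm hij)
        exact Or.inr ⟨by omega, h1, h2.symm⟩
  · intro hij
    rcases hij with rfl | ⟨h1, h2, h3⟩
    · exact h.1.refl i
    · -- θ i j for m ≤ i, m ≤ j, i ≡ j mod d
      have key : ∀ a b, m ≤ a → m ≤ b → a ≤ b → a % d = b % d → θ a b := by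
        intro a b hma hmb hab hmod
        -- lift both to level ≥ i₀ by e₀-chains, then connect by d-chain
        obtain ⟨t, ht⟩ : d ∣ b - a := (Nat.modEq_iff_dvd' hab).mp hmod
        have hA1 : θ a (a + i₀ * e₀) := hchain₀ i₀ a hma
        have hB1 : θ b (b + i₀ * e₀) := hchain₀ i₀ b hmb
        have hge : i₀ ≤ a + i₀ * e₀ := by
          have := Nat.le_mul_of_pos_right i₀ he₀pos
          omega
        have hmid : θ (a + i₀ * e₀) (b + i₀ * e₀) := by
          have hcm : d * t = t * d := by ring
          have heq : a + i₀ * e₀ + t * d = b + i₀ * e₀ := by omega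
          have h' := hchain t (a + i₀ * e₀) hge
          rwa [heq] at h'
        exact h.1.trans hA1 (h.1.trans hmid (h.1.symm hB1))
      rcases le_total i j with hle | hle
      · exact key i j h1 h2 hle h3
      · exact h.1.symm (key j i h2 h1 hle h3.symm)

/-! ### Encoding congruences -/

/-- Decode a code for a translation-invariant equivalence on ℕ. -/
def decodeTheta : Option (ℕ × ℕ) → ℕ → ℕ → Prop
  | none => Eq
  | some p => natCong p.1 p.2

/-- A code correctly describes a relation on ℕ. -/
def GoodCode (c : Option (ℕ × ℕ)) (θ : ℕ → ℕ → Prop) : Prop :=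
  match c with
  | none => θ = Eq
  | some p => 1 ≤ p.2 ∧ θ = natCong p.1 p.2

lemma goodCode_iff {c : Option (ℕ × ℕ)} {θ : ℕ → ℕ → Prop} (h : GoodCode c θ)
    (a b : ℕ) : θ a b ↔ decodeTheta c a b := by
  cases c with
  | none => rw [show θ = Eq from h]; exact Iff.rfl
  | some p => rw [show θ = natCong p.1 p.2 from h.2]; exact Iff.rfl

/-- Codes for congruences on `ℕ × PM n`. -/
def Code (n : ℕ) : Type :=
  (PM n → Option (ℕ × ℕ)) × (PM n → PM n → Finset (ℕ × ℕ))

/-- Decoding a code into a relation on `ℕ × PM n`. -/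
def decode (c : Code n) (a b : ℕ × PM n) : Prop :=
  ∃ p ∈ c.2 a.2 b.2, ∃ k,
    decodeTheta (c.1 a.2) (p.1 + k) a.1 ∧ decodeTheta (c.1 b.2) (p.2 + k) b.1

instance : Finite (PM n) := by
  have : Finite (Set (V n × V n)) := inferInstance
  refine Finite.of_injective (fun s : PM n => {p : V n × V n | s.r p.1 p.2}) ?_
  intro s t h
  apply Setoid.ext
  intro x y
  have := Set.ext_iff.mp h (x, y)
  exact this

instance : Countable (Code n) := by
  unfold Code
  infer_instance

section Sigma

variable {σ : (ℕ × PM n) → (ℕ × PM n) → Prop}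

lemma sigma_shift (hσ : IsCongruence (tmul (n := n)) σ) (k : ℕ) {i j : ℕ}
    {α β : PM n} (h : σ (i, α) (j, β)) : σ (i + k, α) (j + k, β) := by
  induction k with
  | zero => simpa using h
  | succ k ih =>
      have := (hσ.2 _ _ (1, idp) ih).1
      rw [tmul_shift, tmul_shift] at this
      have e1 : 1 + (i + k) = i + (k + 1) := by omega
      have e2 : 1 + (j + k) = j + (k + 1) := by omega
      rwa [e1, e2] at this

lemma natCong_reduce (m d : ℕ) (hd : 1 ≤ d) (i : ℕ) :
    ∃ i₀, i₀ < m + d ∧ natCong m d i₀ i := by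
  by_cases h : i < m + d
  · exact ⟨i, h, natCong_refl _ _ _⟩
  · have hd0 : 0 < d := hd
    refine ⟨m + (i - m) % d, by have := Nat.mod_lt (i - m) hd0; omega,
      Or.inr ⟨by omega, by omega, ?_⟩⟩
    have h1 : m + (i - m) = i := by omega
    calc (m + (i - m) % d) % d
        = (m % d + (i - m) % d % d) % d := Nat.add_mod _ _ _
      _ = (m % d + (i - m) % d) % d := by rw [Nat.mod_mod_of_dvd _ dvd_rfl]
      _ = (m + (i - m)) % d := (Nat.add_mod _ _ _).symm
      _ = i % d := by rw [h1]

/-- The central "window" lemma: the restriction of a congruence `σ` to a pair of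
columns `(α,β)` is reconstructible from a finite window and the ℕ-congruence codes. -/
lemma pair_window (hσ : IsCongruence (tmul (n := n)) σ) (α β : PM n)
    (cα cβ : Option (ℕ × ℕ))
    (hα : GoodCode cα (fun i j => σ (i, α) (j, α)))
    (hβ : GoodCode cβ (fun i j => σ (i, β) (j, β))) :
    ∃ w : Finset (ℕ × ℕ), ∀ i j, σ (i, α) (j, β) ↔
      ∃ p ∈ w, ∃ k, decodeTheta cα (p.1 + k) i ∧ decodeTheta cβ (p.2 + k) j := by
  classical
  have toσα : ∀ a b, decodeTheta cα a b → σ (a, α) (b, α) :=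
    fun a b h => (goodCode_iff hα a b).mpr h
  have ofσα : ∀ a b, σ (a, α) (b, α) → decodeTheta cα a b :=
    fun a b h => (goodCode_iff hα a b).mp h
  have toσβ : ∀ a b, decodeTheta cβ a b → σ (a, β) (b, β) :=
    fun a b h => (goodCode_iff hβ a b).mpr h
  have ofσβ : ∀ a b, σ (a, β) (b, β) → decodeTheta cβ a b :=
    fun a b h => (goodCode_iff hβ a b).mp h
  -- the backward direction holds for every window consisting of σ-pairs
  have bwd : ∀ w : Finset (ℕ × ℕ), (∀ p ∈ w, σ (p.1, α) (p.2, β)) →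
      ∀ i j, (∃ p ∈ w, ∃ k, decodeTheta cα (p.1 + k) i ∧ decodeTheta cβ (p.2 + k) j) →
      σ (i, α) (j, β) := by
    rintro w hw i j ⟨p, hp, k, h1, h2⟩
    have hs : σ (p.1 + k, α) (p.2 + k, β) := sigma_shift hσ k (hw p hp)
    exact hσ.1.trans (hσ.1.trans (hσ.1.symm (toσα _ _ h1)) hs) (toσβ _ _ h2)
  match cα, hα with
  | none, hα =>
    match cβ, hβ with
    | none, hβ =>
      -- both trivial: σ restricted to (α,β) is a single translation orbit (or empty)
      by_cases hne : ∃ i j, σ (i, α) (j, β)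
      · set I : Set ℕ := {i | ∃ j, σ (i, α) (j, β)} with hI
        have hIne : I.Nonempty := by obtain ⟨i, j, hij⟩ := hne; exact ⟨i, j, hij⟩
        obtain ⟨j₀, hj₀⟩ : ∃ j, σ (sInf I, α) (j, β) := Nat.sInf_mem hIne
        refine ⟨{(sInf I, j₀)}, fun i j => ⟨fun hij => ?_, fun h => ?_⟩⟩
        · have hle : sInf I ≤ i := Nat.sInf_le ⟨j, hij⟩
          have htr : σ (sInf I + (i - sInf I), α) (j₀ + (i - sInf I), β) :=
            sigma_shift hσ _ hj₀
          have e1 : sInf I + (i - sInf I) = i := by omega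
          rw [e1] at htr
          have huniq : σ (j₀ + (i - sInf I), β) (j, β) :=
            hσ.1.trans (hσ.1.symm htr) hij
          have hj : j₀ + (i - sInf I) = j := ofσβ _ _ huniq
          exact ⟨(sInf I, j₀), Finset.mem_singleton_self _, i - sInf I, e1, hj⟩
        · refine bwd _ ?_ i j h
          intro p hp
          rw [Finset.mem_singleton] at hp
          rw [hp]
          exact hj₀
      · refine ⟨∅, fun i j => ⟨fun hij => absurd ⟨i, j, hij⟩ hne, ?_⟩⟩
        rintro ⟨p, hp, -⟩
        exact absurd hp (Finset.notMem_empty p)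
    | some pβ, hβ =>
      -- θα trivial, θβ nontrivial: the restriction must be empty
      refine ⟨∅, fun i j => ⟨fun hij => ?_, ?_⟩⟩
      · exfalso
        set m := pβ.1; set d := pβ.2
        have hd : 1 ≤ d := hβ.1
        have h1 : σ (i + m, α) (j + m, β) := sigma_shift hσ m hij
        have h2 : σ (j + m, β) (j + m + d, β) :=
          toσβ _ _ (Or.inr ⟨by omega, by omega, (Nat.add_mod_right _ _).symm⟩)
        have h3 : σ (i + m, α) (j + m + d, β) := hσ.1.trans h1 h2
        have h4 : σ (i + (m + d), α) (j + (m + d), β) := sigma_shift hσ (m + d) hij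
        have e1 : j + (m + d) = j + m + d := by omega
        rw [e1] at h4
        have h5 : σ (i + m, α) (i + (m + d), α) := hσ.1.trans h3 (hσ.1.symm h4)
        have := ofσα _ _ h5
        simp only [decodeTheta] at this
        omega
      · rintro ⟨p, hp, -⟩
        exact absurd hp (Finset.notMem_empty p)
  | some pα, hα =>
    match cβ, hβ with
    | none, hβ =>
      -- θα nontrivial, θβ trivial: the restriction must be empty
      refine ⟨∅, fun i j => ⟨fun hij => ?_, ?_⟩⟩
      · exfalso
        set m := pα.1; set d := pα.2
        have hd : 1 ≤ d := hα.1
        have h1 : σ (i + m, α) (j + m, β) := sigma_shift hσ m hij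
        have h2 : σ (i + m, α) (i + m + d, α) :=
          toσα _ _ (Or.inr ⟨by omega, by omega, (Nat.add_mod_right _ _).symm⟩)
        have h3 : σ (i + m + d, α) (j + m, β) := hσ.1.trans (hσ.1.symm h2) h1
        have h4 : σ (i + (m + d), α) (j + (m + d), β) := sigma_shift hσ (m + d) hij
        have e1 : i + (m + d) = i + m + d := by omega
        rw [e1] at h4
        have h5 : σ (j + m, β) (j + (m + d), β) := hσ.1.trans (hσ.1.symm h3) h4
        have := ofσβ _ _ h5
        simp only [decodeTheta] at this
        omega
      · rintro ⟨p, hp, -⟩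
        exact absurd hp (Finset.notMem_empty p)
    | some pβ, hβ =>
      -- both nontrivial: window of all σ-pairs with small coordinates
      refine ⟨(Finset.range (pα.1 + pα.2) ×ˢ Finset.range (pβ.1 + pβ.2)).filter
        (fun p => σ (p.1, α) (p.2, β)), fun i j => ⟨fun hij => ?_, fun h => ?_⟩⟩
      · obtain ⟨i₀, hi₀lt, hi₀⟩ := natCong_reduce pα.1 pα.2 hα.1 i
        obtain ⟨j₀, hj₀lt, hj₀⟩ := natCong_reduce pβ.1 pβ.2 hβ.1 j
        have s1 : σ (i₀, α) (i, α) := toσα _ _ hi₀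
        have s2 : σ (j₀, β) (j, β) := toσβ _ _ hj₀
        have smid : σ (i₀, α) (j₀, β) :=
          hσ.1.trans (hσ.1.trans s1 hij) (hσ.1.symm s2)
        refine ⟨(i₀, j₀), Finset.mem_filter.mpr
          ⟨Finset.mem_product.mpr ⟨Finset.mem_range.mpr hi₀lt, Finset.mem_range.mpr hj₀lt⟩,
            smid⟩, 0, ?_, ?_⟩
        · simpa [decodeTheta] using hi₀
        · simpa [decodeTheta] using hj₀
      · refine bwd _ ?_ i j h
        intro p hp
        exact (Finset.mem_filter.mp hp).2

end Sigma

end Aux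

/-- For every `n ≥ 1`, the twisted partition monoid `P_n^Φ` has only
countably many congruences. -/
theorem countably_many_congruences (n : ℕ) (hn : 1 ≤ n) :
    Set.Countable {σ : (ℕ × PM n) → (ℕ × PM n) → Prop | IsCongruence (tmul (n := n)) σ} := by
  classical
  have hsub : {σ : (ℕ × PM n) → (ℕ × PM n) → Prop | IsCongruence (tmul (n := n)) σ} ⊆
      Set.range (fun c : Code n => decode c) := by
    intro σ hσ
    -- classify the diagonal restrictions
    have hθ : ∀ α : PM n, ∃ c, GoodCode c (fun i j => σ (i, α) (j, α)) := by
      intro α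
      have hTE : TransEquiv (fun i j => σ (i, α) (j, α)) := by
        constructor
        · exact ⟨fun i => hσ.1.refl (i, α), fun h => hσ.1.symm h,
            fun h h' => hσ.1.trans h h'⟩
        · intro i j hij
          have := (hσ.2 _ _ (1, idp) hij).1
          rw [tmul_shift, tmul_shift] at this
          have e1 : 1 + i = i + 1 := by omega
          have e2 : 1 + j = j + 1 := by omega
          rwa [e1, e2] at this
      rcases transEquiv_classify hTE with h | ⟨m, d, hd, h⟩
      · exact ⟨none, h⟩
      · exact ⟨some (m, d), hd, h⟩
    choose c hc using hθ
    have hw : ∀ α β : PM n, ∃ w : Finset (ℕ × ℕ), ∀ i j, σ (i, α) (j, β) ↔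
        ∃ p ∈ w, ∃ k, decodeTheta (c α) (p.1 + k) i ∧ decodeTheta (c β) (p.2 + k) j :=
      fun α β => pair_window hσ α β (c α) (c β) (hc α) (hc β)
    choose w hw using hw
    refine ⟨(c, w), ?_⟩
    funext a b
    obtain ⟨i, α⟩ := a
    obtain ⟨j, β⟩ := b
    exact propext (hw α β i j).symm
  exact Set.Countable.mono hsub (Set.countable_range _)

end TPM
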